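/- Let c ∈ ℂ^×, μ ∈ ℚ, p ≥ 2, and let g be a Hahn series over ℂ(λ) with value group ℚ. Then there exists a unique Hahn series f over ℂ(λ) such that (z^{−μ}·λ·φ_p − c)(f) = g, i.e. λ·z^{−μ}·φ_p(f) − c·f = g. Moreover, if val_z(θ_{−μ}·g) ≥ 0 then val_z(f) = val_z(g), and if val_z(θ_{−μ}·g) < 0 then val_z(θ_{−μ}·f) = val_z(θ_{−μ}·g)/p, where θ_{−μ} = z^{−μ/(p−1)}. -/

import Mathlib

noncomputable section MahlerAux
-- (assume s1, s2 content; will concatenate later)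


theorem mahler_no_descending (g : HahnSeries ℚ (RatFunc ℂ)) (S : Set ℕ) (hS : S.Infinite)
    (u : ℕ → ℚ) (hu : StrictAnti u) (hmem : ∀ n ∈ S, g.coeff (u n) ≠ 0) : False := by
  have hT : (u '' S).IsWF := g.isWF_support.mono (by rintro _ ⟨n, hn, rfl⟩; exact hmem n hn)
  have hTne : (u '' S).Nonempty := hS.nonempty.image u
  obtain ⟨n₀, hn₀, hmin⟩ := hT.min_mem hTne
  obtain ⟨n₁, hn₁, hlt⟩ := hS.exists_gt n₀
  exact hT.not_lt_min hTne ⟨n₁, hn₁, rfl⟩ (hmin ▸ hu hlt)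

theorem mahler_finite_ne (g : HahnSeries ℚ (RatFunc ℂ)) (u : ℕ → ℚ) (hu : StrictAnti u) :
    {k : ℕ | g.coeff (u k) ≠ 0}.Finite := by
  by_contra hinf
  exact mahler_no_descending g _ hinf u hu fun n hn => hn

theorem mahler_finsum_succ {M : Type*} [AddCommMonoid M] (h : ℕ → M)
    (hfin : (Function.support h).Finite) : ∑ᶠ k, h k = h 0 + ∑ᶠ k, h (k + 1) := by
  obtain ⟨N, hN⟩ := hfin.bddAbove
  have h1 : Function.support h ⊆ ↑(Finset.range (N + 1)) := by
    intro k hk; simp only [Finset.coe_range, Set.mem_Iio]; exact Nat.lt_succ_of_le (hN hk)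
  have h2 : Function.support (fun k => h (k + 1)) ⊆ ↑(Finset.range N) := by
    intro k hk
    simp only [Finset.coe_range, Set.mem_Iio]
    have : k + 1 ≤ N := hN hk
    omega
  rw [finsum_eq_sum_of_support_subset h h1,
    finsum_eq_sum_of_support_subset _ h2, Finset.sum_range_succ']
  exact add_comm _ _



def mahlerNu (p : ℕ) (μ : ℚ) : ℚ := μ / ((p : ℚ) - 1)

def mahlerA (p : ℕ) (μ : ℚ) (γ : ℚ) (k : ℕ) : ℚ :=
  (γ - mahlerNu p μ) / (p : ℚ) ^ k + mahlerNu p μ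

def mahlerB (p : ℕ) (μ : ℚ) (γ : ℚ) (k : ℕ) : ℚ :=
  (p : ℚ) ^ k * (γ - mahlerNu p μ) + mahlerNu p μ

section basic

variable {p : ℕ} {μ γ γ' : ℚ} {k l : ℕ}

theorem mahler_one_lt (hp : 2 ≤ p) : (1 : ℚ) < p := by
  have : (2 : ℚ) ≤ p := by exact_mod_cast hp
  linarith

theorem mahler_pow_pos (hp : 2 ≤ p) (k : ℕ) : (0 : ℚ) < (p : ℚ) ^ k :=
  pow_pos (by linarith [mahler_one_lt hp]) k

theorem mahler_one_le_pow (hp : 2 ≤ p) (k : ℕ) : (1 : ℚ) ≤ (p : ℚ) ^ k :=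
  one_le_pow₀ (mahler_one_lt hp).le

theorem mahlerA_zero : mahlerA p μ γ 0 = γ := by simp [mahlerA]

theorem mahlerB_zero : mahlerB p μ γ 0 = γ := by simp [mahlerB]

theorem mahlerA_one (hp : 2 ≤ p) : mahlerA p μ γ 1 = (γ + μ) / p := by
  have h1 : ((p : ℚ) - 1) ≠ 0 := by linarith [mahler_one_lt (p := p) hp]
  have h0 : (p : ℚ) ≠ 0 := by linarith [mahler_one_lt (p := p) hp]
  rw [mahlerA, mahlerNu]
  field_simp
  ring

theorem mahlerA_a (hp : 2 ≤ p) :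
    mahlerA p μ (mahlerA p μ γ 1) k = mahlerA p μ γ (k + 1) := by
  simp only [mahlerA, pow_one, add_sub_cancel_right]
  rw [div_div, ← pow_succ']

theorem mahlerA_comm (hp : 2 ≤ p) :
    mahlerA p μ (mahlerA p μ γ k) 1 = mahlerA p μ γ (k + 1) := by
  simp only [mahlerA, pow_one, add_sub_cancel_right]
  rw [div_div, ← pow_succ]

theorem mahlerB_a (hp : 2 ≤ p) :
    mahlerB p μ (mahlerA p μ γ 1) (k + 1) = mahlerB p μ γ k := by
  have h0 : (p : ℚ) ≠ 0 := by linarith [mahler_one_lt (p := p) hp]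
  simp only [mahlerB, mahlerA, pow_one, pow_succ, add_sub_cancel_right]
  field_simp

theorem mahlerA_b (hp : 2 ≤ p) :
    mahlerA p μ (mahlerB p μ γ (k + 1)) 1 = mahlerB p μ γ k := by
  have h0 : (p : ℚ) ≠ 0 := by linarith [mahler_one_lt (p := p) hp]
  simp only [mahlerB, mahlerA, pow_one, pow_succ, add_sub_cancel_right]
  field_simp

theorem mahlerA_strictAnti (hp : 2 ≤ p) (hγ : mahlerNu p μ < γ) :
    StrictAnti (mahlerA p μ γ) := by
  intro k l hkl
  have hpow : (p : ℚ) ^ k < (p : ℚ) ^ l := pow_lt_pow_right₀ (mahler_one_lt hp) hkl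
  have := div_lt_div_of_pos_left (by linarith : (0:ℚ) < γ - mahlerNu p μ)
    (mahler_pow_pos hp k) hpow
  simpa [mahlerA] using this

theorem mahlerB_strictAnti (hp : 2 ≤ p) (hγ : γ < mahlerNu p μ) :
    StrictAnti (mahlerB p μ γ) := by
  intro k l hkl
  have hpow : (p : ℚ) ^ k < (p : ℚ) ^ l := pow_lt_pow_right₀ (mahler_one_lt hp) hkl
  have := mul_lt_mul_of_neg_right hpow (by linarith : γ - mahlerNu p μ < 0)
  simpa [mahlerB] using this

theorem mahlerA_lt_mahlerA (hp : 2 ≤ p) (h : γ < γ') (k : ℕ) :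
    mahlerA p μ γ k < mahlerA p μ γ' k := by
  have := div_lt_div_of_pos_right (by linarith : γ - mahlerNu p μ < γ' - mahlerNu p μ)
    (mahler_pow_pos (p := p) hp k)
  simp only [mahlerA]
  linarith

theorem mahlerB_lt_mahlerB (hp : 2 ≤ p) (h : γ < γ') (k : ℕ) :
    mahlerB p μ γ k < mahlerB p μ γ' k := by
  have := mul_lt_mul_of_pos_left (by linarith : γ - mahlerNu p μ < γ' - mahlerNu p μ)
    (mahler_pow_pos (p := p) hp k)
  simp only [mahlerB]
  linarith

theorem mahlerNu_lt_mahlerA (hp : 2 ≤ p) (hγ : mahlerNu p μ < γ) (k : ℕ) :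
    mahlerNu p μ < mahlerA p μ γ k := by
  have := div_pos (by linarith : (0:ℚ) < γ - mahlerNu p μ) (mahler_pow_pos (p := p) hp k)
  simp only [mahlerA]
  linarith

theorem mahlerA_le_self (hp : 2 ≤ p) (hγ : mahlerNu p μ < γ) (k : ℕ) :
    mahlerA p μ γ k ≤ γ := by
  have h1 := mahler_one_le_pow (p := p) hp k
  have h2 : (γ - mahlerNu p μ) / (p:ℚ)^k ≤ γ - mahlerNu p μ :=
    div_le_self (by linarith) h1
  simp only [mahlerA]
  linarith

theorem mahlerB_lt_nu (hp : 2 ≤ p) (hγ : γ < mahlerNu p μ) (k : ℕ) :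
    mahlerB p μ γ k < mahlerNu p μ := by
  have := mul_neg_of_pos_of_neg (mahler_pow_pos (p := p) hp k)
    (by linarith : γ - mahlerNu p μ < 0)
  simp only [mahlerB]
  linarith

theorem mahlerB_le_self (hp : 2 ≤ p) (hγ : γ < mahlerNu p μ) (k : ℕ) :
    mahlerB p μ γ k ≤ γ := by
  have h1 := mahler_one_le_pow (p := p) hp k
  have h2 : (p:ℚ)^k * (γ - mahlerNu p μ) ≤ 1 * (γ - mahlerNu p μ) :=
    mul_le_mul_of_nonpos_right h1 (by linarith)
  simp only [mahlerB]
  linarith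

theorem mahlerA_one_lt_nu (hp : 2 ≤ p) (hγ : γ < mahlerNu p μ) :
    mahlerA p μ γ 1 < mahlerNu p μ := by
  have := div_neg_of_neg_of_pos (by linarith : γ - mahlerNu p μ < 0)
    (mahler_pow_pos (p := p) hp 1)
  simp only [mahlerA]
  linarith

theorem mahlerA_nu : mahlerA p μ (mahlerNu p μ) k = mahlerNu p μ := by
  simp [mahlerA]

end basic


theorem mahlerB_comm {p : ℕ} {μ γ : ℚ} {k : ℕ} :
    mahlerB p μ (mahlerB p μ γ 1) k = mahlerB p μ γ (k + 1) := by
  simp only [mahlerB, pow_one, add_sub_cancel_right, pow_succ]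
  ring

section core

variable (p : ℕ) (μ : ℚ) (c : ℂ) (g : HahnSeries ℚ (RatFunc ℂ))

/-- terms for the expansion above the fixed point -/
def mahlerT (γ : ℚ) (k : ℕ) : RatFunc ℂ :=
  RatFunc.X ^ k * (algebraMap ℂ (RatFunc ℂ) c)⁻¹ ^ k * g.coeff (mahlerA p μ γ k)

/-- terms for the expansion below the fixed point -/
def mahlerV (γ : ℚ) (k : ℕ) : RatFunc ℂ :=
  (algebraMap ℂ (RatFunc ℂ) c) ^ k * (RatFunc.X : RatFunc ℂ)⁻¹ ^ k * g.coeff (mahlerB p μ γ k)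

/-- the candidate solution's coefficient function -/
def mahlerFc (γ : ℚ) : RatFunc ℂ :=
  if mahlerNu p μ < γ then
    -(algebraMap ℂ (RatFunc ℂ) c)⁻¹ * ∑ᶠ k, mahlerT p μ c g γ k
  else if γ = mahlerNu p μ then
    g.coeff (mahlerNu p μ) / (RatFunc.X - algebraMap ℂ (RatFunc ℂ) c)
  else (RatFunc.X : RatFunc ℂ)⁻¹ * ∑ᶠ k, mahlerV p μ c g (mahlerB p μ γ 1) k

variable {p μ c g}

theorem mahlerT_support (hp : 2 ≤ p) {γ : ℚ} (hγ : mahlerNu p μ < γ) :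
    (Function.support (mahlerT p μ c g γ)).Finite := by
  apply (mahler_finite_ne g (mahlerA p μ γ) (mahlerA_strictAnti hp hγ)).subset
  intro k hk
  simp only [Function.mem_support, mahlerT, ne_eq] at hk
  intro h
  simp [h] at hk

theorem mahlerV_support (hp : 2 ≤ p) {γ : ℚ} (hγ : γ < mahlerNu p μ) :
    (Function.support (mahlerV p μ c g γ)).Finite := by
  apply (mahler_finite_ne g (mahlerB p μ γ) (mahlerB_strictAnti hp hγ)).subset
  intro k hk
  simp only [Function.mem_support, mahlerV, ne_eq] at hk
  intro h
  simp [h] at hk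

theorem mahler_shift_support {M : Type*} [Zero M] {h : ℕ → M}
    (hfin : (Function.support h).Finite) :
    (Function.support (fun k => h (k + 1))).Finite := by
  have : Function.support (fun k => h (k + 1)) ⊆ (fun k => k + 1) ⁻¹' Function.support h :=
    fun k hk => hk
  exact (hfin.preimage (add_left_injective 1).injOn).subset this

theorem mahlerX_ne : (RatFunc.X : RatFunc ℂ) ≠ 0 := RatFunc.X_ne_zero

theorem mahlerCc_ne (hc : c ≠ 0) : algebraMap ℂ (RatFunc ℂ) c ≠ 0 := by
  simpa using hc

theorem mahlerXC_ne : (RatFunc.X : RatFunc ℂ) - algebraMap ℂ (RatFunc ℂ) c ≠ 0 := by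
  rw [sub_ne_zero]
  intro h
  have h2 : algebraMap ℂ (RatFunc ℂ) c =
      algebraMap (Polynomial ℂ) (RatFunc ℂ) (Polynomial.C c) := by
    rw [IsScalarTower.algebraMap_apply ℂ (Polynomial ℂ) (RatFunc ℂ)]
    norm_cast
  rw [h2, ← RatFunc.algebraMap_X] at h
  exact Polynomial.X_ne_C c (RatFunc.algebraMap_injective ℂ h)

/-- The fundamental recurrence. -/
theorem mahlerFc_rec (hp : 2 ≤ p) (hc : c ≠ 0) (γ : ℚ) :
    RatFunc.X * mahlerFc p μ c g (mahlerA p μ γ 1) -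
      algebraMap ℂ (RatFunc ℂ) c * mahlerFc p μ c g γ = g.coeff γ := by
  set X : RatFunc ℂ := RatFunc.X with hX
  set Cc : RatFunc ℂ := algebraMap ℂ (RatFunc ℂ) c with hCcdef
  have hCc : Cc ≠ 0 := mahlerCc_ne hc
  rcases lt_trichotomy γ (mahlerNu p μ) with hγ | hγ | hγ
  · -- below the fixed point
    have ha1 : mahlerA p μ γ 1 < mahlerNu p μ := mahlerA_one_lt_nu hp hγ
    rw [mahlerFc, if_neg (not_lt.mpr ha1.le), if_neg (ne_of_lt ha1),
      mahlerFc, if_neg (not_lt.mpr hγ.le), if_neg (ne_of_lt hγ)]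
    have hb1 : mahlerB p μ (mahlerA p μ γ 1) 1 = γ := by
      have := mahlerB_a (p := p) (μ := μ) (γ := γ) (k := 0) hp
      rwa [mahlerB_zero] at this
    rw [hb1]
    have hVfin : (Function.support (mahlerV p μ c g γ)).Finite := mahlerV_support hp hγ
    have hVbfin : (Function.support (mahlerV p μ c g (mahlerB p μ γ 1))).Finite :=
      mahlerV_support hp (mahlerB_lt_nu hp hγ 1)
    have e1 : X * (X⁻¹ * ∑ᶠ k, mahlerV p μ c g γ k) = ∑ᶠ k, mahlerV p μ c g γ k := by
      rw [← mul_assoc, mul_inv_cancel₀ mahlerX_ne, one_mul]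
    have e2 : Cc * (X⁻¹ * ∑ᶠ k, mahlerV p μ c g (mahlerB p μ γ 1) k) =
        ∑ᶠ k, mahlerV p μ c g γ (k + 1) := by
      rw [← mul_assoc, mul_finsum _ _]
      apply finsum_congr
      intro k
      simp only [mahlerV, mahlerB_comm, pow_succ]
      ring
    have e3 : ∑ᶠ k, mahlerV p μ c g γ k =
        mahlerV p μ c g γ 0 + ∑ᶠ k, mahlerV p μ c g γ (k + 1) :=
      mahler_finsum_succ _ hVfin
    have e4 : mahlerV p μ c g γ 0 = g.coeff γ := by
      simp [mahlerV, mahlerB_zero]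
    rw [e1, e2, e3, e4]
    ring
  · -- at the fixed point
    subst hγ
    rw [mahlerA_nu, mahlerFc, if_neg (lt_irrefl _), if_pos rfl]
    rw [← sub_mul, mul_comm, div_mul_cancel₀ _ mahlerXC_ne]
  · -- above the fixed point
    have ha1 : mahlerNu p μ < mahlerA p μ γ 1 := mahlerNu_lt_mahlerA hp hγ 1
    rw [mahlerFc, if_pos ha1, mahlerFc, if_pos hγ]
    have hTfin : (Function.support (mahlerT p μ c g γ)).Finite := mahlerT_support hp hγ
    have hTafin : (Function.support (mahlerT p μ c g (mahlerA p μ γ 1))).Finite :=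
      mahlerT_support hp ha1
    have hTsfin : (Function.support (fun k => mahlerT p μ c g γ (k + 1))).Finite :=
      mahler_shift_support hTfin
    have e1 : X * (-Cc⁻¹ * ∑ᶠ k, mahlerT p μ c g (mahlerA p μ γ 1) k) =
        -(∑ᶠ k, mahlerT p μ c g γ (k + 1)) := by
      rw [neg_mul, mul_neg, neg_inj, ← mul_assoc]
      rw [mul_finsum _ _]
      apply finsum_congr
      intro k
      simp only [mahlerT, mahlerA_a hp, pow_succ]
      ring
    have e2 : Cc * (-Cc⁻¹ * ∑ᶠ k, mahlerT p μ c g γ k) = -(∑ᶠ k, mahlerT p μ c g γ k) := by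
      rw [neg_mul, mul_neg, neg_inj, ← mul_assoc, mul_inv_cancel₀ hCc, one_mul]
    have e3 : ∑ᶠ k, mahlerT p μ c g γ k =
        mahlerT p μ c g γ 0 + ∑ᶠ k, mahlerT p μ c g γ (k + 1) :=
      mahler_finsum_succ _ hTfin
    have e4 : mahlerT p μ c g γ 0 = g.coeff γ := by
      simp [mahlerT, mahlerA_zero]
    rw [e1, e2, e3, e4]
    ring

theorem mahlerFc_ne_pos (hp : 2 ≤ p) {γ : ℚ} (hγ : mahlerNu p μ < γ)
    (h : mahlerFc p μ c g γ ≠ 0) : ∃ k, g.coeff (mahlerA p μ γ k) ≠ 0 := by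
  by_contra hall
  push_neg at hall
  apply h
  rw [mahlerFc, if_pos hγ]
  have : ∀ k, mahlerT p μ c g γ k = 0 := by
    intro k; rw [mahlerT, hall k, mul_zero]
  rw [finsum_congr this, finsum_zero, mul_zero]

theorem mahlerFc_ne_neg (hp : 2 ≤ p) {γ : ℚ} (hγ : γ < mahlerNu p μ)
    (h : mahlerFc p μ c g γ ≠ 0) : ∃ k, g.coeff (mahlerB p μ γ (k + 1)) ≠ 0 := by
  by_contra hall
  push_neg at hall
  apply h
  rw [mahlerFc, if_neg (not_lt.mpr hγ.le), if_neg (ne_of_lt hγ)]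
  have : ∀ k, mahlerV p μ c g (mahlerB p μ γ 1) k = 0 := by
    intro k; rw [mahlerV, mahlerB_comm, hall k, mul_zero]
  rw [finsum_congr this, finsum_zero, mul_zero]

theorem mahler_cast_lt_pow (hp : 2 ≤ p) (k : ℕ) : (k : ℚ) < (p : ℚ) ^ k := by
  have h1 : k < 2 ^ k := Nat.lt_two_pow_self
  have h2 : (2 : ℚ) ^ k ≤ (p : ℚ) ^ k := by
    apply pow_le_pow_left₀ (by norm_num)
    exact_mod_cast hp
  have h3 : (k : ℚ) < (2 : ℚ) ^ k := by exact_mod_cast h1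
  linarith

theorem mahlerFc_isWF (hp : 2 ≤ p) :
    (Function.support (mahlerFc p μ c g)).IsWF := by
  rw [Set.isWF_iff_no_descending_seq]
  intro t ht hmem
  simp only [Function.mem_support] at hmem
  by_cases hcase : ∀ n, mahlerNu p μ < t n
  · -- all above the fixed point
    have hex : ∀ n, ∃ k, g.coeff (mahlerA p μ (t n) k) ≠ 0 := fun n =>
      mahlerFc_ne_pos hp (hcase n) (hmem n)
    choose k hk using hex
    -- the minimum of the support above ν
    set T₀ : Set ℚ := g.support ∩ Set.Ioi (mahlerNu p μ) with hT₀
    have hT₀wf : T₀.IsWF := g.isWF_support.mono Set.inter_subset_left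
    have hT₀ne : T₀.Nonempty :=
      ⟨mahlerA p μ (t 0) (k 0), hk 0, mahlerNu_lt_mahlerA hp (hcase 0) (k 0)⟩
    set m : ℚ := hT₀wf.min hT₀ne with hm
    have hmν : mahlerNu p μ < m := (hT₀wf.min_mem hT₀ne).2
    have hmle : ∀ n, m ≤ mahlerA p μ (t n) (k n) := fun n =>
      hT₀wf.min_le hT₀ne ⟨hk n, mahlerNu_lt_mahlerA hp (hcase n) (k n)⟩
    -- bound on the exponents
    have hbd : ∀ n, (k n : ℚ) ≤ (t 0 - mahlerNu p μ) / (m - mahlerNu p μ) := by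
      intro n
      have h1 : m - mahlerNu p μ ≤ (t n - mahlerNu p μ) / (p : ℚ) ^ (k n) := by
        have := hmle n; simp only [mahlerA] at this; linarith
      have hpow := mahler_pow_pos (p := p) hp (k n)
      have h2 : (m - mahlerNu p μ) * (p : ℚ) ^ (k n) ≤ t n - mahlerNu p μ := by
        rw [← le_div_iff₀ hpow]; exact h1
      have h3 : t n ≤ t 0 := ht.antitone (Nat.zero_le n)
      have h4 : (p : ℚ) ^ (k n) ≤ (t 0 - mahlerNu p μ) / (m - mahlerNu p μ) := by
        rw [le_div_iff₀ (by linarith)]; nlinarith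
      linarith [mahler_cast_lt_pow hp (k n)]
    set K : ℕ := Nat.floor ((t 0 - mahlerNu p μ) / (m - mahlerNu p μ)) with hK
    have hkK : ∀ n, k n < K + 1 := fun n => Nat.lt_succ_of_le (Nat.le_floor (hbd n))
    obtain ⟨j, hj⟩ := Finite.exists_infinite_fiber (fun n => (⟨k n, hkK n⟩ : Fin (K + 1)))
    have hI : ((fun n => (⟨k n, hkK n⟩ : Fin (K + 1))) ⁻¹' {j}).Infinite :=
      Set.infinite_coe_iff.mp hj
    refine mahler_no_descending g _ hI (fun n => mahlerA p μ (t n) j.val) ?_ ?_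
    · intro a b hab
      exact mahlerA_lt_mahlerA hp (ht hab) j.val
    · intro n hn
      have : k n = j.val := by
        simpa [Fin.ext_iff] using hn
      rw [← this]
      exact hk n
  · -- eventually below the fixed point
    push_neg at hcase
    obtain ⟨N, hN⟩ := hcase
    set t' : ℕ → ℚ := fun n => t (N + 1 + n) with ht'
    have ht'anti : StrictAnti t' := by
      intro a b hab
      exact ht (by omega)
    have ht'lt : ∀ n, t' n < mahlerNu p μ := fun n =>
      lt_of_lt_of_le (ht (by omega : N < N + 1 + n)) hN
    have hex : ∀ n, ∃ k, g.coeff (mahlerB p μ (t' n) (k + 1)) ≠ 0 := fun n =>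
      mahlerFc_ne_neg hp (ht'lt n) (hmem (N + 1 + n))
    choose k hk using hex
    have hswf : g.support.IsWF := g.isWF_support
    have hsne : g.support.Nonempty := ⟨mahlerB p μ (t' 0) (k 0 + 1), hk 0⟩
    set M : ℚ := hswf.min hsne with hM
    have hMle : ∀ n, M ≤ mahlerB p μ (t' n) (k n + 1) := fun n => hswf.min_le hsne (hk n)
    have h0 : (0:ℚ) < mahlerNu p μ - t' 0 := by linarith [ht'lt 0]
    have hbd : ∀ n, ((k n + 1 : ℕ) : ℚ) ≤
        (mahlerNu p μ - M) / (mahlerNu p μ - t' 0) := by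
      intro n
      have h1 := hMle n
      simp only [mahlerB] at h1
      have hpow := mahler_pow_pos (p := p) hp (k n + 1)
      have h3 : t' n ≤ t' 0 := ht'anti.antitone (Nat.zero_le n)
      have h4 : (p : ℚ) ^ (k n + 1) ≤ (mahlerNu p μ - M) / (mahlerNu p μ - t' 0) := by
        rw [le_div_iff₀ h0]; nlinarith
      linarith [mahler_cast_lt_pow hp (k n + 1)]
    set K : ℕ := Nat.floor ((mahlerNu p μ - M) / (mahlerNu p μ - t' 0)) with hK
    have hkK : ∀ n, k n < K + 1 := by
      intro n
      have := Nat.le_floor (hbd n)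
      omega
    obtain ⟨j, hj⟩ := Finite.exists_infinite_fiber (fun n => (⟨k n, hkK n⟩ : Fin (K + 1)))
    have hI : ((fun n => (⟨k n, hkK n⟩ : Fin (K + 1))) ⁻¹' {j}).Infinite :=
      Set.infinite_coe_iff.mp hj
    refine mahler_no_descending g _ hI (fun n => mahlerB p μ (t' n) (j.val + 1)) ?_ ?_
    · intro a b hab
      exact mahlerB_lt_mahlerB hp (ht'anti hab) (j.val + 1)
    · intro n hn
      have : k n = j.val := by
        simpa [Fin.ext_iff] using hn
      rw [← this]
      exact hk n

variable (p μ c g) in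
/-- the candidate solution as a Hahn series -/
def mahlerF (hp : 2 ≤ p) : HahnSeries ℚ (RatFunc ℂ) :=
  ⟨mahlerFc p μ c g, (mahlerFc_isWF hp).isPWO⟩

theorem mahlerF_coeff (hp : 2 ≤ p) (γ : ℚ) :
    (mahlerF p μ c g hp).coeff γ = mahlerFc p μ c g γ := rfl

theorem HahnSeries.coeff_order_ne_zero {x : HahnSeries ℚ (RatFunc ℂ)} (hx : x ≠ 0) :
    x.coeff x.order ≠ 0 := by
  rw [← HahnSeries.leadingCoeff_eq]
  exact HahnSeries.leadingCoeff_ne_zero.mpr hx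

theorem mahler_g_coeff_eq_zero {x : ℚ} (hx : x < g.order) : g.coeff x = 0 := by
  by_contra h
  exact absurd (HahnSeries.order_le_of_coeff_ne_zero h) (not_le.mpr hx)

theorem mahlerFc_eq_zero_of_lt_of_nu_le (hp : 2 ≤ p) (hν : mahlerNu p μ ≤ g.order)
    {γ : ℚ} (hγ : γ < g.order) : mahlerFc p μ c g γ = 0 := by
  rcases lt_trichotomy γ (mahlerNu p μ) with h | h | h
  · rw [mahlerFc, if_neg (not_lt.mpr h.le), if_neg (ne_of_lt h)]
    have : ∀ k, mahlerV p μ c g (mahlerB p μ γ 1) k = 0 := by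
      intro k
      rw [mahlerV, mahlerB_comm, mahler_g_coeff_eq_zero
        (lt_of_le_of_lt (mahlerB_le_self hp h (k + 1)) hγ), mul_zero]
    rw [finsum_congr this, finsum_zero, mul_zero]
  · rw [mahlerFc, if_neg (not_lt.mpr h.le), if_pos h,
      mahler_g_coeff_eq_zero (h ▸ hγ), zero_div]
  · rw [mahlerFc, if_pos h]
    have : ∀ k, mahlerT p μ c g γ k = 0 := by
      intro k
      rw [mahlerT, mahler_g_coeff_eq_zero
        (lt_of_le_of_lt (mahlerA_le_self hp h k) hγ), mul_zero]
    rw [finsum_congr this, finsum_zero, mul_zero]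

theorem mahlerFc_order_ne_of_nu_le (hp : 2 ≤ p) (hc : c ≠ 0) (hg : g ≠ 0)
    (hν : mahlerNu p μ ≤ g.order) : mahlerFc p μ c g g.order ≠ 0 := by
  rcases eq_or_lt_of_le hν with h | h
  · rw [mahlerFc, if_neg (not_lt.mpr h.ge), if_pos h.symm, h]
    exact div_ne_zero (HahnSeries.coeff_order_ne_zero hg) mahlerXC_ne
  · rw [mahlerFc, if_pos h]
    have hsingle : ∑ᶠ k, mahlerT p μ c g g.order k = mahlerT p μ c g g.order 0 := by
      apply finsum_eq_single
      intro k hk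
      have hlt : mahlerA p μ g.order k < g.order := by
        have := mahlerA_strictAnti hp h (Nat.pos_of_ne_zero hk)
        rwa [mahlerA_zero] at this
      rw [mahlerT, mahler_g_coeff_eq_zero hlt, mul_zero]
    rw [hsingle, mahlerT, pow_zero, pow_zero, mahlerA_zero, one_mul, one_mul]
    rw [neg_mul]
    exact neg_ne_zero.mpr (mul_ne_zero (inv_ne_zero (mahlerCc_ne hc))
      (HahnSeries.coeff_order_ne_zero hg))

theorem mahlerFc_eq_zero_of_lt_of_lt_nu (hp : 2 ≤ p) (hν : g.order < mahlerNu p μ)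
    {γ : ℚ} (hγ : γ < mahlerA p μ g.order 1) : mahlerFc p μ c g γ = 0 := by
  have hd' : mahlerA p μ g.order 1 < mahlerNu p μ := mahlerA_one_lt_nu hp hν
  have hγν : γ < mahlerNu p μ := hγ.trans hd'
  rw [mahlerFc, if_neg (not_lt.mpr hγν.le), if_neg (ne_of_lt hγν)]
  have hb1d : mahlerB p μ (mahlerA p μ g.order 1) 1 = g.order := by
    have := mahlerB_a (p := p) (μ := μ) (γ := g.order) (k := 0) hp
    rwa [mahlerB_zero] at this
  have : ∀ k, mahlerV p μ c g (mahlerB p μ γ 1) k = 0 := by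
    intro k
    have h1 : mahlerB p μ γ (k + 1) ≤ mahlerB p μ γ 1 :=
      (mahlerB_strictAnti hp hγν).antitone (by omega)
    have h2 : mahlerB p μ γ 1 < g.order := by
      calc mahlerB p μ γ 1 < mahlerB p μ (mahlerA p μ g.order 1) 1 :=
            mahlerB_lt_mahlerB hp hγ 1
        _ = g.order := hb1d
    rw [mahlerV, mahlerB_comm, mahler_g_coeff_eq_zero (lt_of_le_of_lt h1 h2), mul_zero]
  rw [finsum_congr this, finsum_zero, mul_zero]

theorem mahlerFc_order_ne_of_lt_nu (hp : 2 ≤ p) (hc : c ≠ 0) (hg : g ≠ 0)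
    (hν : g.order < mahlerNu p μ) :
    mahlerFc p μ c g (mahlerA p μ g.order 1) ≠ 0 := by
  have hd' : mahlerA p μ g.order 1 < mahlerNu p μ := mahlerA_one_lt_nu hp hν
  rw [mahlerFc, if_neg (not_lt.mpr hd'.le), if_neg (ne_of_lt hd')]
  have hb1d : mahlerB p μ (mahlerA p μ g.order 1) 1 = g.order := by
    have := mahlerB_a (p := p) (μ := μ) (γ := g.order) (k := 0) hp
    rwa [mahlerB_zero] at this
  rw [hb1d]
  have hsingle : ∑ᶠ k, mahlerV p μ c g g.order k = mahlerV p μ c g g.order 0 := by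
    apply finsum_eq_single
    intro k hk
    have hlt : mahlerB p μ g.order k < g.order := by
      have := mahlerB_strictAnti hp hν (Nat.pos_of_ne_zero hk)
      rwa [mahlerB_zero] at this
    rw [mahlerV, mahler_g_coeff_eq_zero hlt, mul_zero]
  rw [hsingle, mahlerV, pow_zero, pow_zero, mahlerB_zero, one_mul, one_mul]
  exact mul_ne_zero (inv_ne_zero mahlerX_ne) (HahnSeries.coeff_order_ne_zero hg)

/-- the homogeneous equation has only the zero solution -/
theorem mahler_hom (hp : 2 ≤ p) (hc : c ≠ 0) (h : HahnSeries ℚ (RatFunc ℂ))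
    (hrel : ∀ γ, RatFunc.X * h.coeff (mahlerA p μ γ 1) =
      algebraMap ℂ (RatFunc ℂ) c * h.coeff γ) : h = 0 := by
  apply HahnSeries.coeff_injective
  funext γ
  show h.coeff γ = 0
  by_contra hγ0
  rcases lt_trichotomy γ (mahlerNu p μ) with hγ | hγ | hγ
  · have hall : ∀ k, h.coeff (mahlerB p μ γ k) ≠ 0 := by
      intro k
      induction k with
      | zero => rwa [mahlerB_zero]
      | succ k ih =>
        intro h0
        have := hrel (mahlerB p μ γ (k + 1))
        rw [mahlerA_b hp, h0, mul_zero] at this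
        exact mul_ne_zero mahlerX_ne ih this
    exact mahler_no_descending h Set.univ Set.infinite_univ (mahlerB p μ γ)
      (mahlerB_strictAnti hp hγ) (fun n _ => hall n)
  · have := hrel γ
    rw [hγ, mahlerA_nu] at this
    have h2 : (RatFunc.X - algebraMap ℂ (RatFunc ℂ) c) * h.coeff (mahlerNu p μ) = 0 := by
      rw [sub_mul, this, sub_self]
    rcases mul_eq_zero.mp h2 with h3 | h3
    · exact mahlerXC_ne h3
    · rw [hγ] at hγ0; exact hγ0 h3
  · have hall : ∀ k, h.coeff (mahlerA p μ γ k) ≠ 0 := by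
      intro k
      induction k with
      | zero => rwa [mahlerA_zero]
      | succ k ih =>
        intro h0
        have := hrel (mahlerA p μ γ k)
        rw [mahlerA_comm hp, h0, mul_zero] at this
        exact mul_ne_zero (mahlerCc_ne hc) ih this.symm
    exact mahler_no_descending h Set.univ Set.infinite_univ (mahlerA p μ γ)
      (mahlerA_strictAnti hp hγ) (fun n _ => hall n)

theorem mahler_coeff_lhs (hp : 2 ≤ p)
    (φ : HahnSeries ℚ (RatFunc ℂ) → HahnSeries ℚ (RatFunc ℂ))
    (hφ : ∀ (f : HahnSeries ℚ (RatFunc ℂ)) (γ : ℚ), (φ f).coeff γ = f.coeff (γ / p))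
    (f : HahnSeries ℚ (RatFunc ℂ)) (γ : ℚ) :
    (HahnSeries.single (-μ) (1 : RatFunc ℂ) * ((RatFunc.X : RatFunc ℂ) • φ f) -
      (algebraMap ℂ (RatFunc ℂ) c) • f).coeff γ =
    RatFunc.X * f.coeff (mahlerA p μ γ 1) - algebraMap ℂ (RatFunc ℂ) c * f.coeff γ := by
  rw [HahnSeries.coeff_sub, HahnSeries.coeff_smul, smul_eq_mul]
  congr 1
  have hγ : γ = (γ + μ) + (-μ) := by ring
  calc (HahnSeries.single (-μ) (1 : RatFunc ℂ) * ((RatFunc.X : RatFunc ℂ) • φ f)).coeff γ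
      = (HahnSeries.single (-μ) (1 : RatFunc ℂ) *
          ((RatFunc.X : RatFunc ℂ) • φ f)).coeff ((γ + μ) + (-μ)) := by rw [← hγ]
    _ = 1 * ((RatFunc.X : RatFunc ℂ) • φ f).coeff (γ + μ) :=
        HahnSeries.coeff_single_mul_add
    _ = RatFunc.X * (φ f).coeff (γ + μ) := by
        rw [one_mul, HahnSeries.coeff_smul, smul_eq_mul]
    _ = RatFunc.X * f.coeff (mahlerA p μ γ 1) := by
        rw [hφ, mahlerA_one hp]

theorem mahler_eq_iff (hp : 2 ≤ p)
    (φ : HahnSeries ℚ (RatFunc ℂ) → HahnSeries ℚ (RatFunc ℂ))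
    (hφ : ∀ (f : HahnSeries ℚ (RatFunc ℂ)) (γ : ℚ), (φ f).coeff γ = f.coeff (γ / p))
    (f : HahnSeries ℚ (RatFunc ℂ)) :
    (HahnSeries.single (-μ) (1 : RatFunc ℂ) * ((RatFunc.X : RatFunc ℂ) • φ f) -
      (algebraMap ℂ (RatFunc ℂ) c) • f = g) ↔
    ∀ γ, RatFunc.X * f.coeff (mahlerA p μ γ 1) -
      algebraMap ℂ (RatFunc ℂ) c * f.coeff γ = g.coeff γ := by
  constructor
  · intro h γ
    rw [← mahler_coeff_lhs hp φ hφ f γ, h]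
  · intro h
    apply HahnSeries.coeff_injective
    funext γ
    rw [mahler_coeff_lhs hp φ hφ f γ, h γ]

end core

end MahlerAux

/-- Let `c ∈ ℂ^×`, `μ ∈ ℚ`, `p ≥ 2`, and let `g` be a Hahn series over `ℂ(λ)` (here
`RatFunc ℂ`, `λ = RatFunc.X`) with value group `ℚ`. Then there is a unique Hahn series
`f` with `z^{−μ}·λ·φ_p(f) − c·f = g`. Moreover, if `val_z(θ_{−μ} g) ≥ 0` (i.e.
`g.order ≥ μ/(p−1)`) then `val_z f = val_z g`, and if `val_z(θ_{−μ} g) < 0` then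
`val_z(θ_{−μ} f) = val_z(θ_{−μ} g)/p`, where `θ_{−μ} = z^{−μ/(p−1)}`. -/
theorem existsUnique_order_one_mahler (p : ℕ) (hp : 2 ≤ p) (μ : ℚ) (c : ℂ) (hc : c ≠ 0)
    (φ : HahnSeries ℚ (RatFunc ℂ) → HahnSeries ℚ (RatFunc ℂ))
    (hφ : ∀ (f : HahnSeries ℚ (RatFunc ℂ)) (γ : ℚ), (φ f).coeff γ = f.coeff (γ / p))
    (g : HahnSeries ℚ (RatFunc ℂ)) :
    (∃! f : HahnSeries ℚ (RatFunc ℂ),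
      HahnSeries.single (-μ) (1 : RatFunc ℂ) * ((RatFunc.X : RatFunc ℂ) • φ f) -
        (algebraMap ℂ (RatFunc ℂ) c) • f = g) ∧
    ∀ f : HahnSeries ℚ (RatFunc ℂ),
      HahnSeries.single (-μ) (1 : RatFunc ℂ) * ((RatFunc.X : RatFunc ℂ) • φ f) -
          (algebraMap ℂ (RatFunc ℂ) c) • f = g →
      g ≠ 0 →
      f ≠ 0 ∧
        (μ / ((p : ℚ) - 1) ≤ g.order → f.order = g.order) ∧
        (g.order < μ / ((p : ℚ) - 1) →
          f.order - μ / ((p : ℚ) - 1) = (g.order - μ / ((p : ℚ) - 1)) / p) := by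
  have hνdef : μ / ((p : ℚ) - 1) = mahlerNu p μ := rfl
  set F := mahlerF p μ c g hp with hFdef
  have hFeq : HahnSeries.single (-μ) (1 : RatFunc ℂ) * ((RatFunc.X : RatFunc ℂ) • φ F) -
      (algebraMap ℂ (RatFunc ℂ) c) • F = g :=
    (mahler_eq_iff hp φ hφ F).mpr (fun γ => by
      rw [mahlerF_coeff, mahlerF_coeff]; exact mahlerFc_rec hp hc γ)
  have huniq : ∀ f₁ f₂ : HahnSeries ℚ (RatFunc ℂ),
      HahnSeries.single (-μ) (1 : RatFunc ℂ) * ((RatFunc.X : RatFunc ℂ) • φ f₁) -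
        (algebraMap ℂ (RatFunc ℂ) c) • f₁ = g →
      HahnSeries.single (-μ) (1 : RatFunc ℂ) * ((RatFunc.X : RatFunc ℂ) • φ f₂) -
        (algebraMap ℂ (RatFunc ℂ) c) • f₂ = g → f₁ = f₂ := by
    intro f₁ f₂ h1 h2
    have h1' := (mahler_eq_iff hp φ hφ f₁).mp h1
    have h2' := (mahler_eq_iff hp φ hφ f₂).mp h2
    have hsub : f₁ - f₂ = 0 := by
      apply mahler_hom hp hc
      intro γ
      have e1 := h1' γ
      have e2 := h2' γ
      rw [HahnSeries.coeff_sub, HahnSeries.coeff_sub]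
      linear_combination e1 - e2
    exact sub_eq_zero.mp hsub
  constructor
  · exact ⟨F, hFeq, fun y hy => huniq y F hy hFeq⟩
  · intro f hf hg
    have hfF : f = F := huniq f F hf hFeq
    subst hfF
    have hcoeff : ∀ γ, F.coeff γ = mahlerFc p μ c g γ := fun γ => mahlerF_coeff hp γ
    refine ⟨?_, ?_, ?_⟩
    · rcases le_or_gt (mahlerNu p μ) g.order with h | h
      · exact HahnSeries.ne_zero_of_coeff_ne_zero
          ((hcoeff g.order) ▸ mahlerFc_order_ne_of_nu_le hp hc hg h)
      · exact HahnSeries.ne_zero_of_coeff_ne_zero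
          ((hcoeff (mahlerA p μ g.order 1)) ▸ mahlerFc_order_ne_of_lt_nu hp hc hg h)
    · intro h
      rw [hνdef] at h
      have hne : F.coeff g.order ≠ 0 :=
        (hcoeff g.order) ▸ mahlerFc_order_ne_of_nu_le hp hc hg h
      have hle : F.order ≤ g.order := HahnSeries.order_le_of_coeff_ne_zero hne
      have hFne : F ≠ 0 := HahnSeries.ne_zero_of_coeff_ne_zero hne
      have hge : ¬ F.order < g.order := fun hlt =>
        (HahnSeries.coeff_order_ne_zero hFne)
          ((hcoeff F.order).trans (mahlerFc_eq_zero_of_lt_of_nu_le hp h hlt))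
      exact le_antisymm hle (not_lt.mp hge)
    · intro h
      rw [hνdef] at h
      have hne : F.coeff (mahlerA p μ g.order 1) ≠ 0 :=
        (hcoeff (mahlerA p μ g.order 1)) ▸ mahlerFc_order_ne_of_lt_nu hp hc hg h
      have hle : F.order ≤ mahlerA p μ g.order 1 := HahnSeries.order_le_of_coeff_ne_zero hne
      have hFne : F ≠ 0 := HahnSeries.ne_zero_of_coeff_ne_zero hne
      have hge : ¬ F.order < mahlerA p μ g.order 1 := fun hlt =>
        (HahnSeries.coeff_order_ne_zero hFne)
          ((hcoeff F.order).trans (mahlerFc_eq_zero_of_lt_of_lt_nu hp h hlt))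
      have hord : F.order = mahlerA p μ g.order 1 := le_antisymm hle (not_lt.mp hge)
      rw [hord, hνdef]
      simp only [mahlerA, pow_one]
      ring
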